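/- Let X be a Hilbert space, X_n Hilbert spaces with p_n ∈ L(X,X_n), ‖p_n u‖→‖u‖ for each u. Suppose A_n, T_n, B_n, K_n ∈ L(X_n) satisfy: ‖T_n‖, ‖T_n⁻¹‖, ‖B_n‖, ‖B_n⁻¹‖ ≤ C uniformly; B ∈ L(X) bijective; (K_n) compact (in the discrete approximation scheme sense); T_n and B_n asymptotically consistent to some T and B respectively; and A_n T_n = B_n + K_n. Then (A_n) is regular: any bounded sequence (u_n) with (A_n u_n) compact is itself compact. -/

import Mathlib

/-- A sequence `u_n ∈ X_n` is discretely compact: every subsequence has a subsubsequence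
converging (in the sense `‖p_n u - u_n‖ → 0`) to some `u ∈ X`. -/
def DiscCompact {X : Type*} [NormedAddCommGroup X] [InnerProductSpace ℂ X]
    {Xn : ℕ → Type*} [∀ n, NormedAddCommGroup (Xn n)] [∀ n, InnerProductSpace ℂ (Xn n)]
    (p : ∀ n, X →L[ℂ] Xn n) (u : ∀ n, Xn n) : Prop :=
  ∀ φ : ℕ → ℕ, StrictMono φ → ∃ ψ : ℕ → ℕ, StrictMono ψ ∧ ∃ v : X,
    Filter.Tendsto (fun k => ‖p (φ (ψ k)) v - u (φ (ψ k))‖) Filter.atTop (nhds 0)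

/-- A sequence of operators `K_n ∈ L(X_n)` is discretely compact: it maps bounded
discrete sequences to discretely compact sequences. -/
def DiscCompactOp {X : Type*} [NormedAddCommGroup X] [InnerProductSpace ℂ X]
    {Xn : ℕ → Type*} [∀ n, NormedAddCommGroup (Xn n)] [∀ n, InnerProductSpace ℂ (Xn n)]
    (p : ∀ n, X →L[ℂ] Xn n) (Kn : ∀ n, Xn n →L[ℂ] Xn n) : Prop :=
  ∀ (u : ∀ n, Xn n) (C : ℝ), (∀ n, ‖u n‖ ≤ C) → DiscCompact p (fun n => Kn n (u n))

/-- T-compatibility theorem: if `A_n T_n = B_n + K_n` with uniformly invertible `T_n, B_n`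
asymptotically consistent to `T` and a bijective `B`, and `(K_n)` compact, then `(A_n)` is
regular. -/
theorem stmt8 {X : Type*} [NormedAddCommGroup X] [InnerProductSpace ℂ X] [CompleteSpace X]
    {Xn : ℕ → Type*} [∀ n, NormedAddCommGroup (Xn n)] [∀ n, InnerProductSpace ℂ (Xn n)]
    [∀ n, CompleteSpace (Xn n)]
    (p : ∀ n, X →L[ℂ] Xn n)
    (hp : ∀ u : X, Filter.Tendsto (fun n => ‖p n u‖) Filter.atTop (nhds ‖u‖))
    (An Tn Bn Kn STn SBn : ∀ n, Xn n →L[ℂ] Xn n) (C : ℝ)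
    (hTn : ∀ n, ‖Tn n‖ ≤ C ∧ ‖STn n‖ ≤ C ∧
        (STn n).comp (Tn n) = ContinuousLinearMap.id ℂ (Xn n) ∧
        (Tn n).comp (STn n) = ContinuousLinearMap.id ℂ (Xn n))
    (hBn : ∀ n, ‖Bn n‖ ≤ C ∧ ‖SBn n‖ ≤ C ∧
        (SBn n).comp (Bn n) = ContinuousLinearMap.id ℂ (Xn n) ∧
        (Bn n).comp (SBn n) = ContinuousLinearMap.id ℂ (Xn n))
    (T B : X →L[ℂ] X) (hB : Function.Bijective B)
    (hK : DiscCompactOp p Kn)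
    (hconsT : ∀ u : X,
      Filter.Tendsto (fun n => ‖Tn n (p n u) - p n (T u)‖) Filter.atTop (nhds 0))
    (hconsB : ∀ u : X,
      Filter.Tendsto (fun n => ‖Bn n (p n u) - p n (B u)‖) Filter.atTop (nhds 0))
    (hATBK : ∀ n, (An n).comp (Tn n) = Bn n + Kn n) :
    ∀ (u : ∀ n, Xn n) (C' : ℝ), (∀ n, ‖u n‖ ≤ C') →
      DiscCompact p (fun n => An n (u n)) → DiscCompact p u := by
  intro u C' hu hAu φ hφ
  classical
  set v : ∀ n, Xn n := fun n => STn n (u n) with hv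
  have hTv : ∀ n, Tn n (v n) = u n := by
    intro n
    have h := congrArg (fun f : Xn n →L[ℂ] Xn n => f (u n)) (hTn n).2.2.2
    simpa using h
  have hC0 : (0 : ℝ) ≤ C := le_trans (norm_nonneg _) (hTn 0).1
  have hvbd : ∀ n, ‖v n‖ ≤ C * C' := by
    intro n
    calc ‖v n‖ ≤ ‖STn n‖ * ‖u n‖ := (STn n).le_opNorm (u n)
    _ ≤ C * C' := by
        have h1 := (hTn n).2.1
        have h2 := hu n
        have : (0:ℝ) ≤ C' := le_trans (norm_nonneg _) (hu n)
        nlinarith [norm_nonneg (STn n), norm_nonneg (u n)]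
  have hdec : ∀ n, An n (u n) = Bn n (v n) + Kn n (v n) := by
    intro n
    have h := congrArg (fun f : Xn n →L[ℂ] Xn n => f (v n)) (hATBK n)
    simpa [hTv n] using h
  obtain ⟨ψ₁, hψ₁, a, ha⟩ := hAu φ hφ
  obtain ⟨ψ₂, hψ₂, kk, hkk⟩ := hK v (C * C') hvbd (φ ∘ ψ₁) (hφ.comp hψ₁)
  refine ⟨ψ₁ ∘ ψ₂, hψ₁.comp hψ₂, T (hB.2 (a - kk)).choose, ?_⟩
  set z : X := (hB.2 (a - kk)).choose with hzdef
  have hBz : B z = a - kk := (hB.2 (a - kk)).choose_spec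
  set σ : ℕ → ℕ := fun k => φ (ψ₁ (ψ₂ k)) with hσ
  have hσtop : Filter.Tendsto σ Filter.atTop Filter.atTop :=
    (hφ.comp (hψ₁.comp hψ₂)).tendsto_atTop
  have ha2 : Filter.Tendsto (fun k => ‖p (σ k) a - An (σ k) (u (σ k))‖)
      Filter.atTop (nhds 0) := ha.comp hψ₂.tendsto_atTop
  have hkk2 : Filter.Tendsto (fun k => ‖p (σ k) kk - Kn (σ k) (v (σ k))‖)
      Filter.atTop (nhds 0) := hkk
  -- ‖p (B z) - Bn v‖ → 0 along σ
  have hBv : Filter.Tendsto (fun k => ‖p (σ k) (B z) - Bn (σ k) (v (σ k))‖)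
      Filter.atTop (nhds 0) := by
    have hsum := ha2.add hkk2
    rw [add_zero] at hsum
    refine squeeze_zero (fun k => norm_nonneg _) (fun k => ?_) hsum
    have : p (σ k) (B z) - Bn (σ k) (v (σ k)) =
        (p (σ k) a - An (σ k) (u (σ k))) - (p (σ k) kk - Kn (σ k) (v (σ k))) := by
      rw [hBz, hdec (σ k)]
      simp [map_sub]
      abel
    rw [this]
    exact norm_sub_le _ _
  -- ‖Bn (p z - v)‖ → 0 along σ
  have hBpz : Filter.Tendsto (fun k => ‖Bn (σ k) (p (σ k) z - v (σ k))‖)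
      Filter.atTop (nhds 0) := by
    have hc := (hconsB z).comp hσtop
    have hsum := hc.add hBv
    rw [add_zero] at hsum
    refine squeeze_zero (fun k => norm_nonneg _) (fun k => ?_) hsum
    have : Bn (σ k) (p (σ k) z - v (σ k)) =
        (Bn (σ k) (p (σ k) z) - p (σ k) (B z)) +
        (p (σ k) (B z) - Bn (σ k) (v (σ k))) := by
      simp [map_sub]
    rw [this]
    exact norm_add_le _ _
  -- ‖p z - v‖ → 0 along σ
  have hpzv : Filter.Tendsto (fun k => ‖p (σ k) z - v (σ k)‖)
      Filter.atTop (nhds 0) := by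
    have hmul : Filter.Tendsto (fun k => C * ‖Bn (σ k) (p (σ k) z - v (σ k))‖)
        Filter.atTop (nhds 0) := by
      have := hBpz.const_mul C
      simpa using this
    refine squeeze_zero (fun k => norm_nonneg _) (fun k => ?_) hmul
    have hid := congrArg (fun f : Xn (σ k) →L[ℂ] Xn (σ k) =>
        f (p (σ k) z - v (σ k))) (hBn (σ k)).2.2.1
    simp only [ContinuousLinearMap.coe_comp', Function.comp_apply,
      ContinuousLinearMap.coe_id', id_eq] at hid
    calc ‖p (σ k) z - v (σ k)‖
        = ‖SBn (σ k) (Bn (σ k) (p (σ k) z - v (σ k)))‖ := by rw [hid]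
      _ ≤ ‖SBn (σ k)‖ * ‖Bn (σ k) (p (σ k) z - v (σ k))‖ := (SBn _).le_opNorm _
      _ ≤ C * ‖Bn (σ k) (p (σ k) z - v (σ k))‖ :=
          mul_le_mul_of_nonneg_right (hBn (σ k)).2.1 (norm_nonneg _)
  -- conclude: ‖p (T z) - u‖ → 0 along σ
  have hc := (hconsT z).comp hσtop
  have hmul : Filter.Tendsto (fun k => ‖Tn (σ k) (p (σ k) z) - p (σ k) (T z)‖ +
      C * ‖p (σ k) z - v (σ k)‖) Filter.atTop (nhds 0) := by
    have h2 : Filter.Tendsto (fun k => C * ‖p (σ k) z - v (σ k)‖)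
        Filter.atTop (nhds 0) := by simpa using hpzv.const_mul C
    simpa using hc.add h2
  refine squeeze_zero (fun k => norm_nonneg _) (fun k => ?_) hmul
  have heq : p (σ k) (T z) - u (σ k) =
      -(Tn (σ k) (p (σ k) z) - p (σ k) (T z)) + Tn (σ k) (p (σ k) z - v (σ k)) := by
    rw [map_sub, hTv (σ k)]
    abel
  calc ‖p (σ k) (T z) - u (σ k)‖
      ≤ ‖-(Tn (σ k) (p (σ k) z) - p (σ k) (T z))‖ +
        ‖Tn (σ k) (p (σ k) z - v (σ k))‖ := by rw [heq]; exact norm_add_le _ _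
    _ ≤ ‖Tn (σ k) (p (σ k) z) - p (σ k) (T z)‖ + C * ‖p (σ k) z - v (σ k)‖ := by
        rw [norm_neg]
        refine add_le_add le_rfl ?_
        calc ‖Tn (σ k) (p (σ k) z - v (σ k))‖
            ≤ ‖Tn (σ k)‖ * ‖p (σ k) z - v (σ k)‖ := (Tn _).le_opNorm _
          _ ≤ C * ‖p (σ k) z - v (σ k)‖ :=
              mul_le_mul_of_nonneg_right (hTn (σ k)).1 (norm_nonneg _)
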